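/- Consider the clipped empirical-frequency forecaster for binary labels: given y_1, …, y_n ∈ {0,1}, at each round t = 1, …, n let m_{t−1} = ∑_{j<t} y_j, q_t = (m_{t−1} + 1)/(t + 1), γ_t = 1/(2√(t + 1)), and predict p_t = 0 if q_t < 1/2 − γ_t, p_t = 1 if q_t > 1/2 + γ_t, and p_t = 1/2 + (q_t − 1/2)/(2γ_t) otherwise. Then for every binary sequence y_1, …, y_n, ∑_{t=1}^n |p_t − y_t| − min_{p ∈ [0,1]} ∑_{t=1}^n |p − y_t| ≤ √(n + 1). -/

import Mathlib

/-- The binary label at (0-based) round index `t`, viewed as a real number. -/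
def binLabel (y : ℕ → Bool) (t : ℕ) : ℝ := if y t then 1 else 0

/-- The clipped empirical-frequency forecaster: at (0-based) round index `i`
(i.e. round `t = i + 1`), with `m = ∑_{j<i} y_j` ones seen so far, it forms the
Laplace estimate `q = (m + 1)/(t + 1)`, the confidence width
`γ = 1/(2√(t + 1))`, and predicts `0` if `q < 1/2 − γ`, `1` if `q > 1/2 + γ`,
and `1/2 + (q − 1/2)/(2γ)` otherwise. -/
noncomputable def clippedPred (y : ℕ → Bool) (i : ℕ) : ℝ :=
  let m : ℝ := ∑ j ∈ Finset.range i, binLabel y j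
  let q : ℝ := (m + 1) / ((i : ℝ) + 2)
  let γ : ℝ := 1 / (2 * Real.sqrt ((i : ℝ) + 2))
  if q < 1 / 2 - γ then 0
  else if q > 1 / 2 + γ then 1
  else 1 / 2 + (q - 1 / 2) / (2 * γ)

namespace CFAux


/-- Huber-type potential, with common denominator `4*g`. -/
noncomputable def Hub (g d : ℝ) : ℝ := (if |d| ≤ g then d^2 + g^2 else 2*g*(abs d)) / (4*g)

/-- clamp of `d/(2g)` to `[-1/2, 1/2]`. -/
noncomputable def cC (g d : ℝ) : ℝ := max (-g) (min g d) / (2*g)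

lemma cC_le (g d : ℝ) (hg : 0 < g) : cC g d ≤ 1/2 := by
  have h : max (-g) (min g d) ≤ g := max_le (by linarith) (min_le_left _ _)
  have h2 : max (-g) (min g d) / (2*g) ≤ g / (2*g) := by gcongr
  calc cC g d ≤ g / (2*g) := h2
    _ = 1/2 := by field_simp

lemma le_cC (g d : ℝ) (hg : 0 < g) : -(1/2) ≤ cC g d := by
  have h : -g ≤ max (-g) (min g d) := le_max_left _ _
  have h2 : (-g) / (2*g) ≤ max (-g) (min g d) / (2*g) := by gcongr
  calc -(1/2) = (-g)/(2*g) := by field_simp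
    _ ≤ cC g d := h2

lemma abs_div_two_le_hub (g d : ℝ) (hg : 0 < g) : abs d / 2 ≤ Hub g d := by
  unfold Hub
  split_ifs with h
  · rw [div_le_div_iff₀ (by norm_num) (by positivity)]
    nlinarith [sq_nonneg (abs d - g), sq_abs d]
  · rw [div_le_div_iff₀ (by norm_num) (by positivity)]
    ring_nf
    nlinarith [abs_nonneg d]

lemma hub_mono (g g' d : ℝ) (hg : 0 < g) (hgg : g ≤ g') :
    Hub g' d ≤ Hub g d + (g' - g)/4 := by
  have hg' : 0 < g' := lt_of_lt_of_le hg hgg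
  have hsab : (abs d)^2 = d^2 := sq_abs d
  have hab : 0 ≤ abs d := abs_nonneg d
  unfold Hub
  split_ifs with h1 h2 h2
  · rw [← sub_nonneg]
    have e : (d^2 + g^2)/(4*g) + (g' - g)/4 - (d^2 + g'^2)/(4*g') = d^2*(g'-g)/(4*g*g') := by
      field_simp; ring
    rw [e]
    have : (0:ℝ) ≤ g' - g := by linarith
    positivity
  · rw [← sub_nonneg]
    have e : 2*g*(abs d)/(4*g) + (g' - g)/4 - (d^2 + g'^2)/(4*g')
        = (2*(abs d)*g' - d^2 - g*g')/(4*g') := by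
      field_simp; ring
    rw [e]
    apply div_nonneg _ (by positivity)
    nlinarith [mul_nonneg (sub_nonneg.2 h1) hab,
      mul_nonneg (le_of_lt (sub_pos.2 (not_le.1 h2))) hg'.le]
  · exact absurd (le_trans h2 hgg) h1
  · rw [← sub_nonneg]
    have e : 2*g*(abs d)/(4*g) + (g' - g)/4 - 2*g'*(abs d)/(4*g') = (g' - g)/4 := by
      field_simp; ring
    rw [e]; linarith

lemma hub_smooth (g d x : ℝ) (hg : 0 < g) :
    Hub g x ≤ Hub g d + (x - d) * cC g d + (x - d)^2/(4*g) := by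
  have key : ∀ z : ℝ, Hub g z ≤ (z^2 + g^2)/(4*g) := by
    intro z
    unfold Hub
    split_ifs with h
    · exact le_rfl
    · rw [div_le_div_iff₀ (by positivity) (by positivity)]
      nlinarith [sq_nonneg (abs z - g), sq_abs z, abs_nonneg z]
  rcases le_or_gt (abs d) g with hd | hd
  · -- interior: cC = d/(2g)
    obtain ⟨hd1, hd2⟩ := abs_le.mp hd
    have hc : cC g d = d/(2*g) := by
      unfold cC
      rw [min_eq_right hd2, max_eq_right hd1]
    have hH : Hub g d = (d^2 + g^2)/(4*g) := by unfold Hub; rw [if_pos hd]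
    rw [hc, hH]
    have e : (d^2 + g^2)/(4*g) + (x - d)*(d/(2*g)) + (x-d)^2/(4*g) = (x^2 + g^2)/(4*g) := by
      field_simp; ring
    rw [e]
    exact key x
  · rcases lt_abs.mp hd with hdp | hdn
    · -- d > g : cC = 1/2-side
      have hc : cC g d = g/(2*g) := by
        unfold cC
        rw [min_eq_left hdp.le, max_eq_right (by linarith : -g ≤ g)]
      have hH : Hub g d = 2*g*d/(4*g) := by
        unfold Hub
        rw [if_neg (not_le.2 hd), abs_of_pos (hg.trans hdp)]
      rw [hc, hH]
      have e : 2*g*d/(4*g) + (x - d)*(g/(2*g)) + (x-d)^2/(4*g) = (2*g*x + (x-d)^2)/(4*g) := by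
        field_simp; ring
      rw [e]
      rcases le_or_gt (abs x) g with hx | hx
      · have hH' : Hub g x = (x^2 + g^2)/(4*g) := by unfold Hub; rw [if_pos hx]
        rw [hH', div_le_div_iff₀ (by positivity) (by positivity)]
        obtain ⟨hx1, hx2⟩ := abs_le.mp hx
        nlinarith [mul_nonneg (by linarith : (0:ℝ) ≤ d - g) (by linarith : (0:ℝ) ≤ d + g - 2*x)]
      · have hH' : Hub g x = 2*g*(abs x)/(4*g) := by unfold Hub; rw [if_neg (not_le.2 hx)]
        rw [hH', div_le_div_iff₀ (by positivity) (by positivity)]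
        rcases lt_abs.mp hx with hxp | hxn
        · rw [abs_of_pos (hg.trans hxp)]
          nlinarith [sq_nonneg (x - d)]
        · rw [abs_of_neg (by linarith : x < 0)]
          nlinarith [sq_nonneg (g + x),
            mul_nonneg (by linarith : (0:ℝ) ≤ d - g) (by linarith : (0:ℝ) ≤ d + g - 2*x)]
    · -- d < -g
      have hdn' : d < -g := by linarith
      have hc : cC g d = (-g)/(2*g) := by
        unfold cC
        rw [min_eq_right (by linarith : d ≤ g), max_eq_left (by linarith : d ≤ -g)]
      have hH : Hub g d = 2*g*(-d)/(4*g) := by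
        unfold Hub
        rw [if_neg (not_le.2 hd), abs_of_neg (by linarith : d < 0)]
      rw [hc, hH]
      have e : 2*g*(-d)/(4*g) + (x - d)*((-g)/(2*g)) + (x-d)^2/(4*g)
          = (-(2*g*x) + (x-d)^2)/(4*g) := by
        field_simp; ring
      rw [e]
      rcases le_or_gt (abs x) g with hx | hx
      · have hH' : Hub g x = (x^2 + g^2)/(4*g) := by unfold Hub; rw [if_pos hx]
        rw [hH', div_le_div_iff₀ (by positivity) (by positivity)]
        obtain ⟨hx1, hx2⟩ := abs_le.mp hx
        nlinarith [mul_nonneg (by linarith : (0:ℝ) ≤ -d - g) (by linarith : (0:ℝ) ≤ 2*x - d + g)]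
      · have hH' : Hub g x = 2*g*(abs x)/(4*g) := by unfold Hub; rw [if_neg (not_le.2 hx)]
        rw [hH', div_le_div_iff₀ (by positivity) (by positivity)]
        rcases lt_abs.mp hx with hxp | hxn
        · rw [abs_of_pos (hg.trans hxp)]
          nlinarith [sq_nonneg (g - x),
            mul_nonneg (by linarith : (0:ℝ) ≤ -d - g) (by linarith : (0:ℝ) ≤ 2*x - d + g)]
        · rw [abs_of_neg (by linarith : x < 0)]
          nlinarith [sq_nonneg (x - d)]




noncomputable def gg (i : ℕ) : ℝ := Real.sqrt ((i:ℝ) + 2)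

noncomputable def dW (y : ℕ → Bool) (i : ℕ) : ℝ :=
  ∑ j ∈ Finset.range i, (if y j then (1:ℝ) else -1)

lemma gg_pos (i : ℕ) : 0 < gg i := Real.sqrt_pos.2 (by positivity)

lemma gg_sq (i : ℕ) : (gg i)^2 = (i:ℝ) + 2 := Real.sq_sqrt (by positivity)

lemma gg_mono (i : ℕ) : gg i ≤ gg (i+1) := by
  apply Real.sqrt_le_sqrt
  push_cast
  linarith

lemma dW_succ (y : ℕ → Bool) (i : ℕ) :
    dW y (i+1) = dW y i + (if y i then (1:ℝ) else -1) := Finset.sum_range_succ _ _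

lemma dW_eq (y : ℕ → Bool) (i : ℕ) :
    dW y i = 2 * (∑ j ∈ Finset.range i, binLabel y j) - i := by
  induction i with
  | zero => simp [dW]
  | succ k ih =>
    rw [dW_succ, ih, Finset.sum_range_succ]
    push_cast
    cases h : y k <;> simp [binLabel, h] <;> ring


lemma pred_eq (y : ℕ → Bool) (i : ℕ) :
    clippedPred y i = 1/2 + cC (gg i) (dW y i) := by
  have hg : 0 < gg i := gg_pos i
  have hg2 : (gg i)^2 = (i:ℝ) + 2 := gg_sq i
  have hd : dW y i = 2 * (∑ j ∈ Finset.range i, binLabel y j) - i := dW_eq y i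
  set g := gg i with hgdef
  set d := dW y i with hddef
  set m := ∑ j ∈ Finset.range i, binLabel y j with hm
  have hi : (i:ℝ) = g^2 - 2 := by linarith [hg2]
  have hq : (m + 1) / ((i:ℝ) + 2) - 1/2 = d / (2 * g^2) := by
    rw [hd, hi]
    field_simp
    ring
  have he : (1/(2*g)) * (2*g^2) = g := by field_simp
  have hγ : (1:ℝ) / (2 * Real.sqrt ((i:ℝ)+2)) = 1/(2*g) := rfl
  show (if (m + 1) / ((i : ℝ) + 2) < 1 / 2 - 1 / (2 * Real.sqrt ((i : ℝ) + 2)) then (0:ℝ)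
      else if (m + 1) / ((i : ℝ) + 2) > 1 / 2 + 1 / (2 * Real.sqrt ((i : ℝ) + 2)) then 1
      else 1 / 2 + ((m + 1) / ((i : ℝ) + 2) - 1 / 2) / (2 * (1 / (2 * Real.sqrt ((i : ℝ) + 2)))))
      = 1/2 + cC g d
  rw [hγ]
  split_ifs with h1 h2
  · -- q < 1/2 - γ  →  d < -g
    have h1' : d / (2*g^2) < -(1/(2*g)) := by rw [← hq]; linarith
    rw [div_lt_iff₀ (by positivity : (0:ℝ) < 2*g^2)] at h1'
    have hdg : d < -g := by nlinarith [he]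
    unfold cC
    rw [min_eq_right (by linarith : d ≤ g), max_eq_left (by linarith : d ≤ -g)]
    field_simp
    norm_num
  · -- q > 1/2 + γ  →  d > g
    have h2' : 1/(2*g) < d / (2*g^2) := by rw [← hq]; linarith
    rw [lt_div_iff₀ (by positivity : (0:ℝ) < 2*g^2)] at h2'
    have hdg : g < d := by nlinarith [he]
    unfold cC
    rw [min_eq_left hdg.le, max_eq_right (by linarith : -g ≤ g)]
    field_simp
    ring
  · -- middle: -g ≤ d ≤ g
    have h2' : d / (2*g^2) ≤ 1/(2*g) := by rw [← hq]; linarith [not_lt.mp h2]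
    rw [div_le_iff₀ (by positivity : (0:ℝ) < 2*g^2)] at h2'
    have hub : d ≤ g := by nlinarith [he]
    have h1' : -(1/(2*g)) ≤ d / (2*g^2) := by rw [← hq]; linarith [not_lt.mp h1]
    rw [le_div_iff₀ (by positivity : (0:ℝ) < 2*g^2)] at h1'
    have hlb : -g ≤ d := by nlinarith [he]
    unfold cC
    rw [min_eq_right hub, max_eq_right hlb, hq]
    have hee : d / (2 * g ^ 2) / (2 * (1 / (2 * g))) = d / (2*g) := by
      field_simp
    rw [hee]


lemma loss_eq (y : ℕ → Bool) (i : ℕ) :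
    |clippedPred y i - binLabel y i|
      = 1/2 - (if y i then (1:ℝ) else -1) * cC (gg i) (dW y i) := by
  have hg := gg_pos i
  have h1 := cC_le (gg i) (dW y i) hg
  have h2 := le_cC (gg i) (dW y i) hg
  rw [pred_eq]
  unfold binLabel
  cases h : y i
  · simp only [h, Bool.false_eq_true, if_false]
    rw [abs_of_nonneg (by linarith)]; ring
  · simp only [h, if_true]
    rw [abs_of_nonpos (by linarith)]; ring

lemma loss_sum (y : ℕ → Bool) (n : ℕ) :
    (∑ t ∈ Finset.range n, |clippedPred y t - binLabel y t|)
      = (n:ℝ)/2 - ∑ t ∈ Finset.range n, (if y t then (1:ℝ) else -1) * cC (gg t) (dW y t) := by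
  rw [Finset.sum_congr rfl (fun t _ => loss_eq y t), Finset.sum_sub_distrib,
    Finset.sum_const, Finset.card_range]
  push_cast
  ring

lemma main_ind (y : ℕ → Bool) (n : ℕ) :
    Hub (gg n) (dW y n)
      ≤ gg 0 / 4 + (∑ i ∈ Finset.range n, (if y i then (1:ℝ) else -1) * cC (gg i) (dW y i))
        + (∑ i ∈ Finset.range n, 1/(4 * gg i)) + (gg n - gg 0)/4 := by
  induction n with
  | zero =>
    have h0 : dW y 0 = 0 := by simp [dW]
    rw [h0]
    unfold Hub
    rw [if_pos (by simpa using (gg_pos 0).le)]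
    have heq : ((0:ℝ)^2 + (gg 0)^2) / (4 * gg 0) = gg 0 / 4 := by
      have := (gg_pos 0).ne'
      field_simp
      ring
    rw [heq]
    simp
  | succ k ih =>
    have hg := gg_pos k
    have hmono := hub_mono (gg k) (gg (k+1)) (dW y (k+1)) hg (gg_mono k)
    have hsm := hub_smooth (gg k) (dW y k) (dW y (k+1)) hg
    have hstep : dW y (k+1) - dW y k = (if y k then (1:ℝ) else -1) := by
      rw [dW_succ]; ring
    rw [hstep] at hsm
    have hsq : (if y k then (1:ℝ) else -1)^2 = 1 := by
      cases h : y k <;> norm_num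
    rw [hsq] at hsm
    rw [Finset.sum_range_succ, Finset.sum_range_succ]
    linarith [hsm, hmono, ih]

lemma sum_inv_le (n : ℕ) :
    (∑ i ∈ Finset.range n, 1/(4 * gg i)) ≤ (Real.sqrt ((n:ℝ)+1) - 1)/2 := by
  induction n with
  | zero => simp
  | succ k ih =>
    rw [Finset.sum_range_succ]
    have hg := gg_pos k
    have ha : (0:ℝ) ≤ Real.sqrt ((k:ℝ)+1) := Real.sqrt_nonneg _
    have ha2 : (Real.sqrt ((k:ℝ)+1))^2 = (k:ℝ)+1 := Real.sq_sqrt (by positivity)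
    have hb2 : (gg k)^2 = (k:ℝ)+2 := gg_sq k
    have hco : Real.sqrt ((k:ℝ)+1+1) = gg k := by
      unfold gg
      rw [show ((k:ℝ)+1+1) = (k:ℝ)+2 from by ring]
    have hstep : 1/(4 * gg k) ≤ (gg k - Real.sqrt ((k:ℝ)+1))/2 := by
      rw [div_le_div_iff₀ (by positivity) (by norm_num)]
      nlinarith [sq_nonneg (gg k - Real.sqrt ((k:ℝ)+1))]
    push_cast
    rw [hco]
    linarith

lemma comparator (y : ℕ → Bool) (n : ℕ) :
    ((n:ℝ) - |dW y n|)/2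
      ≤ sInf ((fun p : ℝ => ∑ t ∈ Finset.range n, |p - binLabel y t|) '' Set.Icc (0:ℝ) 1) := by
  apply le_csInf
  · exact ⟨_, ⟨0, by norm_num, rfl⟩⟩
  · rintro b ⟨p, hp, rfl⟩
    obtain ⟨hp0, hp1⟩ := hp
    have hterm : ∀ t, |p - binLabel y t| = p + binLabel y t - 2*p*(binLabel y t) := by
      intro t
      unfold binLabel
      split
      · rw [abs_of_nonpos (by linarith)]; ring
      · rw [abs_of_nonneg (by linarith)]; ring
    simp only [hterm]
    set M := ∑ t ∈ Finset.range n, binLabel y t with hM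
    have hsum : (∑ t ∈ Finset.range n, (p + binLabel y t - 2*p*(binLabel y t)))
        = (n:ℝ)*p + M - 2*p*M := by
      rw [Finset.sum_sub_distrib, Finset.sum_add_distrib, Finset.sum_const, Finset.card_range,
        ← Finset.mul_sum, ← hM]
      push_cast
      ring
    rw [hsum]
    have hdn : dW y n = 2*M - n := by rw [dW_eq, hM]
    have hM0 : 0 ≤ M := Finset.sum_nonneg (fun t _ => by unfold binLabel; split <;> norm_num)
    have hMn : M ≤ n := by
      calc M ≤ ∑ t ∈ Finset.range n, (1:ℝ) :=
        Finset.sum_le_sum (fun t _ => by unfold binLabel; split <;> norm_num)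
      _ = n := by simp
    rw [hdn]
    rcases abs_cases (2*M - (n:ℝ)) with ⟨he, hz⟩ | ⟨he, hz⟩ <;> rw [he] <;> nlinarith

end CFAux

/-- For every binary sequence `y_1, …, y_n`, the regret of the
clipped empirical-frequency forecaster satisfies
`∑_{t=1}^n |p_t − y_t| − min_{p ∈ [0,1]} ∑_{t=1}^n |p − y_t| ≤ √(n + 1)`. -/
theorem clipped_forecaster_regret (n : ℕ) (y : ℕ → Bool) :
    (∑ t ∈ Finset.range n, |clippedPred y t - binLabel y t|) -
        sInf ((fun p : ℝ => ∑ t ∈ Finset.range n, |p - binLabel y t|) '' Set.Icc (0 : ℝ) 1)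
      ≤ Real.sqrt ((n : ℝ) + 1) := by
  have hcomp := CFAux.comparator y n
  have hloss := CFAux.loss_sum y n
  have hhub := CFAux.abs_div_two_le_hub (CFAux.gg n) (CFAux.dW y n) (CFAux.gg_pos n)
  have hmain := CFAux.main_ind y n
  have hsum := CFAux.sum_inv_le n
  have hs : (0:ℝ) ≤ Real.sqrt ((n:ℝ)+1) := Real.sqrt_nonneg _
  have hgn : CFAux.gg n ≤ Real.sqrt ((n:ℝ)+1) + 1 := by
    unfold CFAux.gg
    have h1 : ((n:ℝ)+2) ≤ (Real.sqrt ((n:ℝ)+1) + 1)^2 := by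
      nlinarith [Real.sq_sqrt (by positivity : (0:ℝ) ≤ (n:ℝ)+1)]
    calc Real.sqrt ((n:ℝ)+2) ≤ Real.sqrt ((Real.sqrt ((n:ℝ)+1) + 1)^2) := Real.sqrt_le_sqrt h1
      _ = Real.sqrt ((n:ℝ)+1) + 1 := Real.sqrt_sq (by positivity)
  have hg0 : 0 < CFAux.gg 0 := CFAux.gg_pos 0
  linarith
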